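/- arXiv:1601.07466 — 6 statements merged into one kernel-verified Lean document; each statement's English description precedes it below -/
import Mathlib

section
/- For every partition λ, the sum of μ(δ) over all partition divisors δ of λ equals 1 if λ = ∅ and equals 0 otherwise. -/
/-- The set of partition divisors (sub-partitions) of `l`. -/
def pdivisors (l : Multiset ℕ+) : Finset (Multiset ℕ+) := l.powerset.toFinset

/-- Partition-theoretic Möbius function. -/
def pmu (l : Multiset ℕ+) : ℂ := if l.Nodup then (-1 : ℂ) ^ (Multiset.card l) else 0

/-- The "integer" of a partition: the product of its parts. -/
def nInt (l : Multiset ℕ+) : ℕ := (l.map (fun a => (a : ℕ))).prod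

/-- Partition-theoretic phi function. -/
noncomputable def pphi (l : Multiset ℕ+) : ℂ :=
  (nInt l : ℂ) * ∏ a ∈ l.toFinset, (1 - (a : ℂ)⁻¹)

/-- Convert a `Nat.Partition n` to a multiset of positive integers. -/
def toPtn {n : ℕ} (p : n.Partition) : Multiset ℕ+ :=
  p.parts.pmap (fun x hx => ⟨x, hx⟩) (fun _ hx => p.parts_pos hx)

/-- The partition function `p(n)`. -/
def partcount (n : ℕ) : ℕ := Fintype.card (Nat.Partition n)

/-- A partition lies in `P₌` iff it is nonempty with all parts equal. -/
def isPeq (l : Multiset ℕ+) : Prop :=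
  ∃ (a : ℕ+) (k : ℕ), 0 < k ∧ l = Multiset.replicate k a

/-- The sum of the partition Möbius function over partition divisors of `λ` is `1` if
`λ = ∅` and `0` otherwise. -/
theorem pmu_sum_divisors (l : Multiset ℕ+) :
    (∑ δ ∈ pdivisors l, pmu δ) = if l = 0 then 1 else 0 := by
  classical
  have key : (∑ δ ∈ pdivisors l, pmu δ)
      = ∑ t ∈ l.toFinset.powerset, (-1 : ℂ) ^ t.card := by
    rw [← Finset.sum_filter_ne_zero (pdivisors l)]
    refine Finset.sum_bij (fun δ _ => δ.toFinset) ?_ ?_ ?_ ?_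
    · intro δ hδ
      simp only [Finset.mem_filter, pdivisors, Multiset.mem_toFinset,
        Multiset.mem_powerset] at hδ
      rw [Finset.mem_powerset]
      intro a ha
      rw [Multiset.mem_toFinset] at ha ⊢
      exact Multiset.mem_of_le hδ.1 ha
    · intro a ha b hb hab
      simp only [Finset.mem_filter, pmu] at ha hb
      have hna : a.Nodup := by by_contra h; simp [h] at ha
      have hnb : b.Nodup := by by_contra h; simp [h] at hb
      have := congrArg Finset.val hab
      rwa [Multiset.toFinset_val, Multiset.toFinset_val, hna.dedup, hnb.dedup] at this
    · intro t ht
      rw [Finset.mem_powerset] at ht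
      refine ⟨t.val, ?_, ?_⟩
      · have h1 : t.val ≤ l.dedup := by
          rw [← Multiset.toFinset_val l]
          refine Multiset.le_iff_subset t.nodup |>.mpr (fun a ha => ?_)
          have := ht (by simpa using ha); simpa using this
        rw [Finset.mem_filter]
        simp only [Finset.mem_filter, pdivisors, Multiset.mem_toFinset, Multiset.mem_powerset, pmu]
        refine ⟨h1.trans (Multiset.dedup_le l), ?_⟩
        simp [t.nodup]
      · simp
    · intro δ hδ
      simp only [Finset.mem_filter, pmu] at hδ
      have hn : δ.Nodup := by by_contra h; simp [pmu, h] at hδ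
      simp [pmu, hn, Multiset.card_toFinset, hn.dedup]
  rw [key]
  have := @Finset.sum_powerset_neg_one_pow_card ℕ+ _ l.toFinset
  have h2 : (∑ t ∈ l.toFinset.powerset, (-1 : ℂ) ^ t.card)
      = ((∑ m ∈ l.toFinset.powerset, (-1 : ℤ) ^ m.card : ℤ) : ℂ) := by
    push_cast; ring_nf
  rw [h2, this]
  by_cases h : l = 0 <;> simp [h, Multiset.toFinset_eq_empty]
end

section
/- For functions f, F : P → ℂ, the following are equivalent: (i) F(λ) = ∑_{δ|λ} f(δ) for all partitions λ; (ii) f(λ) = ∑_{δ|λ} F(δ)·μ(λ/δ) for all partitions λ. (Partition-theoretic Möbius inversion.) -/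
lemma mem_pdivisors {δ l : Multiset ℕ+} : δ ∈ pdivisors l ↔ δ ≤ l := by
  simp [pdivisors]

lemma pmu_sum (l : Multiset ℕ+) :
    ∑ δ ∈ pdivisors l, pmu δ = if l = 0 then 1 else 0 := by
  have h : ∑ δ ∈ pdivisors l, pmu δ
      = ∑ S ∈ l.toFinset.powerset, (-1 : ℂ) ^ S.card := by
    refine (Finset.sum_bij_ne_zero (fun S _ _ => (S : Finset ℕ+).val) ?_ ?_ ?_ ?_).symm
    · intro S hS h0
      rw [mem_pdivisors]
      rw [Finset.mem_powerset] at hS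
      exact (Multiset.le_iff_subset S.nodup).2 fun a ha => by
        simpa using Multiset.mem_toFinset.1 (hS (by simpa using ha))
    · intro a ha h1 b hb h2 hab
      exact Finset.val_injective hab
    · intro δ hδ h0
      have hnd : δ.Nodup := by by_contra hn; simp [pmu, hn] at h0
      refine ⟨⟨δ, hnd⟩, ?_, ?_, rfl⟩
      · rw [Finset.mem_powerset]
        intro a ha
        have : a ∈ δ := by simpa using ha
        exact Multiset.mem_toFinset.2 (Multiset.mem_of_le (mem_pdivisors.1 hδ) this)
      · simpa [pmu, hnd] using h0
    · intro S hS h0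
      simp [pmu, S.nodup]
  rw [h]
  have h1 := @Finset.sum_powerset_neg_one_pow_card ℕ+ _ l.toFinset
  have h2 : ∑ S ∈ l.toFinset.powerset, (-1 : ℂ) ^ S.card
      = ((∑ S ∈ l.toFinset.powerset, (-1 : ℤ) ^ S.card : ℤ) : ℂ) := by push_cast; rfl
  rw [h2, h1]
  by_cases hl : l = 0
  · simp [hl]
  · have : l.toFinset ≠ ∅ := by simpa [Multiset.toFinset_eq_empty] using hl
    simp [hl, this]

lemma pmu_sum_sub (l : Multiset ℕ+) :
    ∑ δ ∈ pdivisors l, pmu (l - δ) = if l = 0 then 1 else 0 := by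
  rw [← pmu_sum l]
  refine Finset.sum_nbij' (fun δ => l - δ) (fun δ => l - δ) ?_ ?_ ?_ ?_ ?_
  · intro a ha; exact mem_pdivisors.2 (tsub_le_self)
  · intro a ha; exact mem_pdivisors.2 (tsub_le_self)
  · intro a ha; exact tsub_tsub_cancel_of_le (mem_pdivisors.1 ha)
  · intro a ha; exact tsub_tsub_cancel_of_le (mem_pdivisors.1 ha)
  · intro a ha; rfl

lemma swap_sum (l : Multiset ℕ+) (t : Multiset ℕ+ → Multiset ℕ+ → ℂ) :
    ∑ δ ∈ pdivisors l, ∑ ε ∈ pdivisors δ, t δ ε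
      = ∑ ε ∈ pdivisors l, ∑ γ ∈ pdivisors (l - ε), t (ε + γ) ε := by
  rw [Finset.sum_sigma', Finset.sum_sigma']
  refine Finset.sum_bij' (fun p _ => (⟨p.2, p.1 - p.2⟩ : Σ _ : Multiset ℕ+, Multiset ℕ+))
    (fun p _ => (⟨p.1 + p.2, p.1⟩ : Σ _ : Multiset ℕ+, Multiset ℕ+)) ?_ ?_ ?_ ?_ ?_
  · rintro ⟨δ, ε⟩ hp
    simp only [Finset.mem_sigma, mem_pdivisors] at hp ⊢
    exact ⟨le_trans hp.2 hp.1, tsub_le_tsub_right hp.1 ε⟩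
  · rintro ⟨ε, γ⟩ hp
    simp only [Finset.mem_sigma, mem_pdivisors] at hp ⊢
    constructor
    · calc ε + γ ≤ ε + (l - ε) := add_le_add_right hp.2 ε
        _ = l := add_tsub_cancel_of_le hp.1
    · exact Multiset.le_add_right ε γ
  · rintro ⟨δ, ε⟩ hp
    simp only [Finset.mem_sigma, mem_pdivisors] at hp
    simp [add_tsub_cancel_of_le hp.2]
  · rintro ⟨ε, γ⟩ hp
    simp
  · rintro ⟨δ, ε⟩ hp
    simp only [Finset.mem_sigma, mem_pdivisors] at hp
    simp only []
    rw [add_tsub_cancel_of_le hp.2]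

lemma ite_step (l : Multiset ℕ+) (g : Multiset ℕ+ → ℂ) :
    ∑ x ∈ pdivisors l, g x * (if l - x = 0 then 1 else 0) = g l := by
  have h : ∀ x ∈ pdivisors l, g x * (if l - x = 0 then 1 else 0)
      = if x = l then g x else 0 := by
    intro x hx
    have hx' := mem_pdivisors.1 hx
    by_cases hxl : x = l
    · simp [hxl]
    · have : l - x ≠ 0 := fun h0 => hxl (le_antisymm hx' (tsub_eq_zero_iff_le.1 h0))
      simp [this, hxl]
  rw [Finset.sum_congr rfl h, Finset.sum_ite_eq' (pdivisors l) l g]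
  simp [mem_pdivisors]

/-- Partition-theoretic Möbius inversion: `F(λ) = ∑_{δ|λ} f(δ)` for all partitions `λ`
iff `f(λ) = ∑_{δ|λ} F(δ)·μ(λ/δ)` for all partitions `λ`. -/
theorem partition_moebius_inversion (f F : Multiset ℕ+ → ℂ) :
    (∀ l : Multiset ℕ+, F l = ∑ δ ∈ pdivisors l, f δ) ↔
      (∀ l : Multiset ℕ+, f l = ∑ δ ∈ pdivisors l, F δ * pmu (l - δ)) := by
  constructor
  · intro h l
    have h1 : ∑ δ ∈ pdivisors l, F δ * pmu (l - δ)
        = ∑ δ ∈ pdivisors l, ∑ ε ∈ pdivisors δ, f ε * pmu (l - δ) := by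
      refine Finset.sum_congr rfl fun δ _ => ?_
      rw [h δ, Finset.sum_mul]
    rw [h1, swap_sum l (fun δ ε => f ε * pmu (l - δ))]
    have h2 : ∀ ε ∈ pdivisors l, ∑ γ ∈ pdivisors (l - ε), f ε * pmu (l - (ε + γ))
        = f ε * (if l - ε = 0 then 1 else 0) := by
      intro ε hε
      rw [← Finset.mul_sum, ← pmu_sum_sub (l - ε)]
      congr 1
      refine Finset.sum_congr rfl fun γ _ => ?_
      rw [tsub_add_eq_tsub_tsub]
    rw [Finset.sum_congr rfl h2, ite_step l f]
  · intro h l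
    have h1 : ∑ δ ∈ pdivisors l, f δ
        = ∑ δ ∈ pdivisors l, ∑ ε ∈ pdivisors δ, F ε * pmu (δ - ε) :=
      Finset.sum_congr rfl fun δ _ => h δ
    rw [h1, swap_sum l (fun δ ε => F ε * pmu (δ - ε))]
    have h2 : ∀ ε ∈ pdivisors l, ∑ γ ∈ pdivisors (l - ε), F ε * pmu (ε + γ - ε)
        = F ε * (if l - ε = 0 then 1 else 0) := by
      intro ε hε
      rw [← Finset.mul_sum, ← pmu_sum (l - ε)]
      congr 1
      refine Finset.sum_congr rfl fun γ _ => ?_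
      congr 1
      simp
    rw [Finset.sum_congr rfl h2, ite_step l F]
end

section
/- For every partition λ, ∑_{δ|λ} φ(δ) = n_λ, where the sum is over all partition divisors δ of λ. -/
lemma nInt_add (s t : Multiset ℕ+) : nInt (s + t) = nInt s * nInt t := by
  simp [nInt]

lemma pphi_zero : pphi 0 = 1 := by simp [pphi, nInt]

lemma pphi_add_disjoint {s t : Multiset ℕ+} (h : Disjoint s.toFinset t.toFinset) :
    pphi (s + t) = pphi s * pphi t := by
  rw [pphi, pphi, pphi, nInt_add, Multiset.toFinset_add, Finset.prod_union h]
  push_cast; ring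

lemma nInt_replicate (a : ℕ+) (k : ℕ) : nInt (Multiset.replicate k a) = (a : ℕ) ^ k := by
  simp [nInt, Multiset.map_replicate, Multiset.prod_replicate]

lemma pphi_replicate (a : ℕ+) (k : ℕ) (hk : 0 < k) :
    pphi (Multiset.replicate k a) = (a : ℂ) ^ k - (a : ℂ) ^ (k - 1) := by
  have ha : (a : ℂ) ≠ 0 := by exact_mod_cast a.ne_zero
  rw [pphi, nInt_replicate, Multiset.toFinset_replicate, if_neg hk.ne']
  push_cast
  rw [Finset.prod_singleton]
  obtain ⟨k, rfl⟩ := Nat.exists_eq_add_of_lt hk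
  field_simp
  simp only [Nat.add_sub_cancel, Nat.add_sub_cancel_left, zero_add]
  ring

lemma geom (a : ℕ+) (m : ℕ) :
    (∑ k ∈ Finset.range (m + 1), pphi (Multiset.replicate k a)) = (a : ℂ) ^ m := by
  induction m with
  | zero => simp [pphi_zero]
  | succ m ih =>
    rw [Finset.sum_range_succ, ih, pphi_replicate a (m+1) (Nat.succ_pos m)]
    simp only [Nat.add_sub_cancel]
    ring

/-- For every partition `λ`, `∑_{δ|λ} φ(δ) = n_λ`. -/
theorem pphi_sum_divisors (l : Multiset ℕ+) :
    (∑ δ ∈ pdivisors l, pphi δ) = (nInt l : ℂ) := by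
  suffices H : ∀ n (l : Multiset ℕ+), Multiset.card l = n →
      (∑ δ ∈ pdivisors l, pphi δ) = (nInt l : ℂ) from H _ l rfl
  intro n
  induction n using Nat.strong_induction_on with
  | _ n ih =>
  intro l hn
  rcases Multiset.empty_or_exists_mem l with rfl | ⟨a, ha⟩
  · simp [pdivisors, pphi_zero, nInt]
  set m := l.count a with hm
  set t := l.filter (· ≠ a) with ht
  have hat : a ∉ t := by simp [ht]
  have hcount : t.count a = 0 := Multiset.count_eq_zero.2 hat
  have hdecomp : Multiset.replicate m a + t = l := by
    rw [hm, ht, ← Multiset.filter_eq' l a]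
    exact Multiset.filter_add_not (· = a) l
  have hmpos : 0 < m := Multiset.count_pos.2 ha
  have hcardt : Multiset.card t < n := by
    rw [← hn, ← hdecomp]
    simp [Multiset.card_replicate]
    omega
  -- image description
  have himage : pdivisors l = Finset.image
      (fun p : ℕ × Multiset ℕ+ => Multiset.replicate p.1 a + p.2)
      ((Finset.range (m + 1)) ×ˢ pdivisors t) := by
    ext δ
    simp only [mem_pdivisors, Finset.mem_image, Finset.mem_product, Finset.mem_range,
      Prod.exists]
    constructor
    · intro hδ
      refine ⟨δ.count a, δ.filter (· ≠ a), ⟨?_, ?_⟩, ?_⟩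
      · rw [← hdecomp] at hδ
        have := Multiset.count_le_of_le a hδ
        simp [hcount] at this
        omega
      · rw [ht]
        exact Multiset.filter_le_filter _ hδ
      · rw [← Multiset.filter_eq' δ a]
        exact Multiset.filter_add_not (· = a) δ
    · rintro ⟨k, s, ⟨hk, hs⟩, rfl⟩
      rw [← hdecomp]
      exact add_le_add ((Multiset.replicate_le_replicate a).2 (by omega)) hs
  rw [himage, Finset.sum_image, Finset.sum_product]
  · have : ∀ k ∈ Finset.range (m+1), ∀ s ∈ pdivisors t,
        pphi (Multiset.replicate k a + s) = pphi (Multiset.replicate k a) * pphi s := by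
      intro k _ s hs
      apply pphi_add_disjoint
      have has : a ∉ s.toFinset := by
        rw [Multiset.mem_toFinset]
        intro h
        exact hat (Multiset.mem_of_le (mem_pdivisors.1 hs) h)
      rw [Finset.disjoint_left]
      intro x hx
      rw [Multiset.toFinset_replicate] at hx
      rcases Nat.eq_zero_or_pos k with rfl | hk
      · simp at hx
      · rw [if_neg hk.ne'] at hx
        simp at hx
        subst hx
        exact has
    calc (∑ k ∈ Finset.range (m+1), ∑ s ∈ pdivisors t,
            pphi (Multiset.replicate k a + s))
        = ∑ k ∈ Finset.range (m+1), ∑ s ∈ pdivisors t,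
            pphi (Multiset.replicate k a) * pphi s := by
          exact Finset.sum_congr rfl fun k hk => Finset.sum_congr rfl fun s hs => this k hk s hs
      _ = (∑ k ∈ Finset.range (m+1), pphi (Multiset.replicate k a)) *
            (∑ s ∈ pdivisors t, pphi s) := by rw [← Finset.sum_mul_sum]
      _ = (a : ℂ) ^ m * (nInt t : ℂ) := by rw [geom, ih _ hcardt t rfl]
      _ = (nInt l : ℂ) := by
          rw [← hdecomp, nInt_add, nInt_replicate]; push_cast; ring
  · intro p hp q hq heq
    simp only [Finset.mem_coe, Finset.mem_product, Finset.mem_range] at hp hq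
    have hps : a ∉ p.2 := fun h => hat (Multiset.mem_of_le (mem_pdivisors.1 hp.2) h)
    have hqs : a ∉ q.2 := fun h => hat (Multiset.mem_of_le (mem_pdivisors.1 hq.2) h)
    have hc := congrArg (Multiset.count a) heq
    simp [Multiset.count_replicate, Multiset.count_eq_zero.2 hps,
      Multiset.count_eq_zero.2 hqs] at hc
    have : p.2 = q.2 := by
      have : Multiset.replicate p.1 a + p.2 = Multiset.replicate q.1 a + q.2 := heq
      rw [hc] at this
      exact add_left_cancel this
    exact Prod.ext hc this
end

section
/- For every partition λ, φ(λ) = n_λ · ∑_{δ|λ} μ(δ)/n_δ, where the sum is over all partition divisors δ of λ. -/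
lemma nInt_zero : nInt 0 = 1 := rfl

lemma nInt_cons (a : ℕ+) (s : Multiset ℕ+) : nInt (a ::ₘ s) = a * nInt s := by
  simp [nInt, Bind.bind, Multiset.cons_bind]

lemma nInt_pos (l : Multiset ℕ+) : 0 < nInt l := by
  induction l using Multiset.induction with
  | empty => exact Nat.one_pos
  | cons a s ih => rw [nInt_cons]; exact Nat.mul_pos a.pos ih

lemma nInt_ne_zero (l : Multiset ℕ+) : (nInt l : ℂ) ≠ 0 := by
  exact_mod_cast (nInt_pos l).ne'

lemma key_prod (δ : Multiset ℕ+) :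
    (δ.map (fun a : ℕ+ => -((a:ℕ):ℂ)⁻¹)).prod = (-1)^(Multiset.card δ) / (nInt δ : ℂ) := by
  induction δ using Multiset.induction with
  | empty => simp [nInt_zero]
  | cons a s ih =>
    have ha : ((a:ℕ):ℂ) ≠ 0 := by exact_mod_cast a.ne_zero
    have hs := nInt_ne_zero s
    simp only [Multiset.map_cons, Multiset.prod_cons, ih, Multiset.card_cons]
    have hn : (nInt (a ::ₘ s) : ℂ) = ((a:ℕ):ℂ) * (nInt s : ℂ) := by
      rw [nInt_cons]; push_cast; ring
    rw [hn, pow_succ]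
    field_simp

/-- For every partition `λ`, `φ(λ) = n_λ · ∑_{δ|λ} μ(δ)/n_δ`. -/
theorem pphi_eq_moebius_sum (l : Multiset ℕ+) :
    pphi l = (nInt l : ℂ) * ∑ δ ∈ pdivisors l, pmu δ / (nInt δ : ℂ) := by
  have hsum : ∑ δ ∈ pdivisors l, pmu δ / (nInt δ : ℂ)
      = ∑ δ ∈ (pdivisors l).filter (fun δ => δ.Nodup), pmu δ / (nInt δ : ℂ) := by
    refine (Finset.sum_filter_of_ne fun δ _ h => ?_).symm
    by_contra hn
    simp [pmu, hn] at h
  have hbij : ∑ δ ∈ (pdivisors l).filter (fun δ => δ.Nodup), pmu δ / (nInt δ : ℂ)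
      = ∑ t ∈ l.toFinset.powerset, ∏ a ∈ t, (-((a:ℕ):ℂ)⁻¹) := by
    refine Finset.sum_nbij' (fun δ => δ.toFinset) (fun t => t.val) ?_ ?_ ?_ ?_ ?_
    · intro δ hδ
      simp only [Finset.mem_filter, pdivisors, Multiset.mem_toFinset,
        Multiset.mem_powerset] at hδ
      simp only [Finset.mem_powerset]
      intro a ha
      simp only [Multiset.mem_toFinset] at ha ⊢
      exact Multiset.mem_of_le hδ.1 ha
    · intro t ht
      simp only [Finset.mem_powerset] at ht
      simp only [Finset.mem_filter, pdivisors, Multiset.mem_toFinset, Multiset.mem_powerset]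
      refine ⟨le_trans (Finset.val_le_iff.mpr ht) ?_, t.nodup⟩
      exact Multiset.dedup_le l
    · intro δ hδ
      simp only [Finset.mem_filter] at hδ
      exact hδ.2.dedup
    · intro t _
      exact Finset.val_toFinset t
    · intro δ hδ
      simp only [Finset.mem_filter] at hδ
      have hd : δ.toFinset.val = δ := hδ.2.dedup
      rw [pmu, if_pos hδ.2, ← key_prod δ]
      rw [Finset.prod, hd]
  rw [hsum, hbij, pphi]
  congr 1
  have h := Finset.prod_add (fun a : ℕ+ => -((a:ℕ):ℂ)⁻¹) (fun _ => (1:ℂ)) l.toFinset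
  simp only [Finset.prod_const_one, mul_one] at h
  rw [← h]
  apply Finset.prod_congr rfl
  intro a _
  ring
end

section
/- Let f : ℤ⁺ → ℂ and set c_n := ∑_{d|n} f(d) for n ≥ 1 and c_0 := 0. Define F(λ) := ∑_{δ|λ, δ∈P₌} f(ℓ(δ)), the sum over partition divisors of λ that lie in P₌. Then ⟨F⟩_q = ∑_{n≥0} c_n qⁿ; equivalently, for every integer n ≥ 0, ∑_{λ⊢n} F(λ) = ∑_{k=0}^{n} c_k · p(n−k). -/
open scoped Classical

lemma map_toPtn {n : ℕ} (p : n.Partition) :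
    (toPtn p).map (fun a : ℕ+ => (a : ℕ)) = p.parts := by
  refine Eq.trans (Multiset.map_pmap ..) ?_
  exact (Multiset.pmap_eq_map _ _ _ _).trans (Multiset.map_id _)

lemma le_toPtn_iff {n : ℕ} (p : n.Partition) (δ : Multiset ℕ+) :
    δ ≤ toPtn p ↔ δ.map (fun a : ℕ+ => (a : ℕ)) ≤ p.parts := by
  have h := Multiset.map_le_map_iff (s := δ) (t := toPtn p)
    (f := fun a : ℕ+ => (a : ℕ)) (fun a b h => PNat.coe_injective h)
  rw [map_toPtn] at h
  exact h.symm

lemma count_ge {n : ℕ} (δ : Multiset ℕ+) (hδ : (δ.map (fun a : ℕ+ => (a : ℕ))).sum ≤ n) :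
    (Finset.univ.filter fun p : n.Partition => δ ≤ toPtn p).card
      = partcount (n - (δ.map (fun a : ℕ+ => (a : ℕ))).sum) := by
  classical
  rw [partcount, ← Finset.card_univ]
  set s := (δ.map (fun a : ℕ+ => (a : ℕ))).sum with hs
  refine Finset.card_bij'
    (fun p hp => ⟨p.parts - δ.map (fun a : ℕ+ => (a : ℕ)), ?_, ?_⟩)
    (fun q _ => ⟨q.parts + δ.map (fun a : ℕ+ => (a : ℕ)), ?_, ?_⟩) ?_ ?_ ?_ ?_
  · intro x hx
    exact p.parts_pos (Multiset.mem_of_le (Multiset.sub_le_self _ _) hx)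
  · have hle : δ.map (fun a : ℕ+ => (a : ℕ)) ≤ p.parts :=
      (le_toPtn_iff p δ).1 (by simpa using hp)
    have h2 : (p.parts - δ.map (fun a : ℕ+ => (a : ℕ))).sum + (δ.map (fun a : ℕ+ => (a : ℕ))).sum
        = p.parts.sum := by
      rw [← Multiset.sum_add, tsub_add_cancel_of_le hle]
    have := p.parts_sum
    omega
  · intro x hx
    rcases Multiset.mem_add.1 hx with h | h
    · exact q.parts_pos h
    · obtain ⟨a, _, rfl⟩ := Multiset.mem_map.1 h
      exact a.property
  · rw [Multiset.sum_add, q.parts_sum]; omega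
  · intro p hp; exact Finset.mem_univ _
  · intro q hq
    simp only [Finset.mem_filter, Finset.mem_univ, true_and]
    rw [le_toPtn_iff]
    exact Multiset.le_add_left _ _
  · intro p hp
    have hle : δ.map (fun a : ℕ+ => (a : ℕ)) ≤ p.parts :=
      (le_toPtn_iff p δ).1 (by simpa using hp)
    ext1
    exact tsub_add_cancel_of_le hle
  · intro q hq
    ext1
    exact add_tsub_cancel_right _ _

lemma msum_le {s t : Multiset ℕ} (h : s ≤ t) : s.sum ≤ t.sum := by
  obtain ⟨u, rfl⟩ := Multiset.le_iff_exists_add.1 h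
  simp


/-- Let `c_n := ∑_{d|n} f(d)` for `n ≥ 1` and `c_0 := 0`, and let
`F(λ) := ∑_{δ|λ, δ∈P₌} f(ℓ(δ))`. Then `⟨F⟩_q = ∑_{n≥0} c_n qⁿ`: in graded form, for every
`n ≥ 0`, `∑_{λ⊢n} F(λ) = ∑_{k=0}^{n} c_k·p(n−k)`. -/
theorem qbracket_of_divisor_coefficients (f : ℕ → ℂ) (c : ℕ → ℂ)
    (hc0 : c 0 = 0) (hc : ∀ n : ℕ, 1 ≤ n → c n = ∑ d ∈ n.divisors, f d)
    (F : Multiset ℕ+ → ℂ)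
    (hF : ∀ l : Multiset ℕ+,
      F l = ∑ δ ∈ pdivisors l, if isPeq δ then f (Multiset.card δ) else 0)
    (n : ℕ) :
    (∑ p : n.Partition, F (toPtn p))
      = ∑ k ∈ Finset.range (n + 1), c k * (partcount (n - k) : ℂ) := by

  classical
  set Sg : Finset (Σ _ : ℕ, ℕ) := (Finset.range (n+1)).sigma (fun k => k.divisors) with hSg
  set e : (Σ _ : ℕ, ℕ) → Multiset ℕ+ := fun x => Multiset.replicate x.2 (x.1 / x.2).toPNat'
    with he
  set D : Finset (Multiset ℕ+) := Sg.image e with hD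
  have hmem : ∀ x ∈ Sg, x.2 ∣ x.1 ∧ x.1 ≠ 0 ∧ x.1 ≤ n := by
    intro x hx
    rw [hSg, Finset.mem_sigma, Finset.mem_range] at hx
    have h2 := Nat.mem_divisors.1 hx.2
    exact ⟨h2.1, h2.2, by omega⟩
  have hcard : ∀ x : (Σ _ : ℕ, ℕ), Multiset.card (e x) = x.2 := by
    intro x; simp [he]
  have hsum : ∀ x ∈ Sg, ((e x).map (fun a : ℕ+ => (a : ℕ))).sum = x.1 := by
    intro x hx
    obtain ⟨hdvd, hne, _⟩ := hmem x hx
    have hx2 : 0 < x.2 := by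
      rcases Nat.eq_zero_or_pos x.2 with h | h
      · exact absurd (h ▸ hdvd) (by simpa [h] using hne ∘ Nat.eq_zero_of_zero_dvd)
      · exact h
    have hq : 0 < x.1 / x.2 := Nat.div_pos (Nat.le_of_dvd (Nat.pos_of_ne_zero hne) hdvd) hx2
    simp only [he, Multiset.map_replicate, Multiset.sum_replicate, smul_eq_mul]
    rw [PNat.toPNat'_coe hq, Nat.mul_div_cancel' hdvd]
  have hD_iff : ∀ δ : Multiset ℕ+,
      δ ∈ D ↔ (isPeq δ ∧ (δ.map (fun a : ℕ+ => (a : ℕ))).sum ≤ n) := by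
    intro δ
    constructor
    · intro hδ
      obtain ⟨x, hx, rfl⟩ := Finset.mem_image.1 hδ
      obtain ⟨hdvd, hne, hle⟩ := hmem x hx
      have hx2 : 0 < x.2 := by
        rcases Nat.eq_zero_or_pos x.2 with h | h
        · exact absurd (h ▸ hdvd) (by simpa [h] using hne ∘ Nat.eq_zero_of_zero_dvd)
        · exact h
      exact ⟨⟨_, x.2, hx2, rfl⟩, by rw [hsum x hx]; exact hle⟩
    · rintro ⟨⟨a, k, hk, rfl⟩, hle⟩
      have hsum' : ((Multiset.replicate k a).map (fun a : ℕ+ => (a : ℕ))).sum = k * (a : ℕ) := by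
        simp [Multiset.map_replicate, Multiset.sum_replicate]
      rw [hsum'] at hle
      refine Finset.mem_image.2 ⟨⟨k * (a : ℕ), k⟩, ?_, ?_⟩
      · rw [hSg, Finset.mem_sigma, Finset.mem_range]
        refine ⟨Nat.lt_succ_of_le hle, Nat.mem_divisors.2 ⟨dvd_mul_right k (a : ℕ), ?_⟩⟩
        have := a.property
        positivity
      · simp only [he]
        congr 1
        have : k * (a : ℕ) / k = (a : ℕ) := Nat.mul_div_cancel_left _ hk
        rw [this]
        exact PNat.coe_toPNat' a
  have einj : ∀ x ∈ Sg, ∀ y ∈ Sg, e x = e y → x = y := by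
    rintro ⟨k1, d1⟩ hx ⟨k2, d2⟩ hy hexy
    have h1 : d1 = d2 := by
      have := congrArg Multiset.card hexy
      rwa [hcard, hcard] at this
    have h2 : k1 = k2 := by
      have := congrArg (fun m : Multiset ℕ+ => (m.map (fun a : ℕ+ => (a : ℕ))).sum) hexy
      rwa [hsum _ hx, hsum _ hy] at this
    subst h1; subst h2; rfl
  calc (∑ p : n.Partition, F (toPtn p))
      = ∑ p : n.Partition, ∑ δ ∈ D,
          (if δ ≤ toPtn p then f (Multiset.card δ) else 0) := by
        refine Finset.sum_congr rfl fun p _ => ?_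
        rw [hF, ← Finset.sum_filter, ← Finset.sum_filter]
        refine Finset.sum_congr ?_ fun _ _ => rfl
        ext δ
        simp only [Finset.mem_filter, pdivisors, Multiset.mem_toFinset,
          Multiset.mem_powerset]
        constructor
        · rintro ⟨hle, hpeq⟩
          refine ⟨(hD_iff δ).2 ⟨hpeq, ?_⟩, hle⟩
          have := msum_le (Multiset.map_le_map (f := fun a : ℕ+ => (a : ℕ)) hle)
          rwa [map_toPtn, p.parts_sum] at this
        · rintro ⟨hmemD, hle⟩
          exact ⟨hle, ((hD_iff δ).1 hmemD).1⟩
    _ = ∑ δ ∈ D, ∑ p : n.Partition,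
          (if δ ≤ toPtn p then f (Multiset.card δ) else 0) := Finset.sum_comm
    _ = ∑ δ ∈ D, ((Finset.univ.filter fun p : n.Partition => δ ≤ toPtn p).card : ℂ)
          * f (Multiset.card δ) := by
        refine Finset.sum_congr rfl fun δ _ => ?_
        rw [← Finset.sum_filter, Finset.sum_const, nsmul_eq_mul]
    _ = ∑ δ ∈ D, f (Multiset.card δ)
          * (partcount (n - (δ.map (fun a : ℕ+ => (a : ℕ))).sum) : ℂ) := by
        refine Finset.sum_congr rfl fun δ hδ => ?_
        rw [count_ge δ ((hD_iff δ).1 hδ).2, mul_comm]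
    _ = ∑ x ∈ Sg, f (Multiset.card (e x))
          * (partcount (n - ((e x).map (fun a : ℕ+ => (a : ℕ))).sum) : ℂ) := by
        rw [hD, Finset.sum_image einj]
    _ = ∑ x ∈ Sg, f x.2 * (partcount (n - x.1) : ℂ) := by
        refine Finset.sum_congr rfl fun x hx => ?_
        rw [hcard, hsum x hx]
    _ = ∑ k ∈ Finset.range (n + 1), ∑ d ∈ k.divisors,
          f d * (partcount (n - k) : ℂ) := by
        rw [hSg, Finset.sum_sigma]
    _ = ∑ k ∈ Finset.range (n + 1), c k * (partcount (n - k) : ℂ) := by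
        refine Finset.sum_congr rfl fun k _ => ?_
        rcases Nat.eq_zero_or_pos k with rfl | hk
        · simp [hc0]
        · rw [hc k hk, Finset.sum_mul]
end

section
/- Let f : ℤ⁺ → ℂ be such that the function (n,k) ↦ f(nk)·μ(n)/n is absolutely summable over ℤ⁺ × ℤ⁺, and define f̃(n) := ∑_{k≥1} f(nk). Then both series below converge absolutely and ∑_{n≥1} f(n)·φ(n)/n = ∑_{n≥1} f̃(n)·μ(n)/n, where φ is the classical Euler totient function and μ is the classical Möbius function. -/
open ArithmeticFunction ArithmeticFunction.Moebius

lemma phi_key : ∀ n > 0, ∑ x ∈ n.divisorsAntidiagonal, (μ x.1 : ℂ) * ((x.2 : ℕ) : ℂ) = ((n.totient : ℕ) : ℂ) := by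
  rw [← sum_eq_iff_sum_mul_moebius_eq (f := fun n => ((n.totient : ℕ) : ℂ)) (g := fun n => ((n : ℕ) : ℂ))]
  intro n hn
  rw [← Nat.cast_sum]
  exact_mod_cast congrArg (Nat.cast : ℕ → ℂ) (Nat.sum_totient n)

lemma phi_div (m : ℕ) (hm : 0 < m) :
    ∑ x ∈ m.divisorsAntidiagonal, (μ x.1 : ℂ) / (x.1 : ℂ) = (m.totient : ℂ) / m := by
  rw [← phi_key m hm, Finset.sum_div]
  refine Finset.sum_congr rfl fun x hx => ?_
  obtain ⟨hxm, hm0⟩ := Nat.mem_divisorsAntidiagonal.mp hx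
  have h1 : (x.1 : ℂ) ≠ 0 := Nat.cast_ne_zero.mpr (Nat.ne_zero_of_mul_ne_zero_left (hxm ▸ hm0))
  have h2 : (x.2 : ℂ) ≠ 0 := Nat.cast_ne_zero.mpr (Nat.ne_zero_of_mul_ne_zero_right (hxm ▸ hm0))
  rw [← hxm]
  push_cast
  field_simp



open ArithmeticFunction ArithmeticFunction.Moebius in
/-- If `(n,k) ↦ f(nk)·μ(n)/n` is absolutely summable over `ℤ⁺ × ℤ⁺`, then with
`f̃(n) := ∑_{k≥1} f(nk)`, both series converge absolutely and
`∑_{n≥1} f(n)φ(n)/n = ∑_{n≥1} f̃(n)μ(n)/n`, where `φ` is the Euler totient function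
and `μ` is the classical Möbius function. -/
theorem totient_moebius_series (f : ℕ → ℂ)
    (h : Summable (fun p : ℕ+ × ℕ+ =>
      ‖f ((p.1 : ℕ) * (p.2 : ℕ)) * (μ (p.1 : ℕ) : ℂ) / ((p.1 : ℕ) : ℂ)‖)) :
    Summable (fun n : ℕ+ =>
      ‖f (n : ℕ) * ((Nat.totient (n : ℕ)) : ℂ) / ((n : ℕ) : ℂ)‖) ∧
    Summable (fun n : ℕ+ =>
      ‖(∑' k : ℕ+, f ((n : ℕ) * (k : ℕ))) * (μ (n : ℕ) : ℂ) / ((n : ℕ) : ℂ)‖) ∧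
    (∑' n : ℕ+, f (n : ℕ) * ((Nat.totient (n : ℕ)) : ℂ) / ((n : ℕ) : ℂ))
      = ∑' n : ℕ+, (∑' k : ℕ+, f ((n : ℕ) * (k : ℕ))) * (μ (n : ℕ) : ℂ) / ((n : ℕ) : ℂ) := by
  set g : ℕ+ × ℕ+ → ℂ :=
    fun p => f ((p.1 : ℕ) * (p.2 : ℕ)) * (μ (p.1 : ℕ) : ℂ) / ((p.1 : ℕ) : ℂ) with hgdef
  have hg : Summable g := summable_norm_iff.mp h
  have hslice : ∀ n : ℕ+, Summable (fun k : ℕ+ => ‖g (n, k)‖) := fun n =>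
    h.comp_injective (i := fun k : ℕ+ => ((n, k) : ℕ+ × ℕ+))
      (fun a b hab => by simpa using hab)
  have hsum2' : Summable (fun n : ℕ+ => ∑' k : ℕ+, ‖g (n, k)‖) :=
    ((summable_prod_of_nonneg (fun p => norm_nonneg _)).mp h).2
  have hf : Summable (fun k : ℕ+ => ‖f (k : ℕ)‖) := by
    have := hslice 1
    simpa [hgdef] using this
  -- first summability
  have S1 : Summable (fun n : ℕ+ =>
      ‖f (n : ℕ) * ((Nat.totient (n : ℕ)) : ℂ) / ((n : ℕ) : ℂ)‖) := by
    refine Summable.of_nonneg_of_le (fun n => norm_nonneg _) (fun n => ?_) hf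
    have hn : (0:ℝ) < ((n : ℕ) : ℝ) := by exact_mod_cast n.pos
    rw [norm_div, norm_mul, Complex.norm_natCast, Complex.norm_natCast, div_le_iff₀ hn]
    have hφ : ((Nat.totient (n : ℕ) : ℕ) : ℝ) ≤ ((n : ℕ) : ℝ) :=
      Nat.cast_le.mpr (Nat.totient_le _)
    exact le_trans (mul_le_mul_of_nonneg_left hφ (norm_nonneg _))
      (le_of_eq rfl)
  -- rewriting the RHS terms
  have hterm : ∀ n : ℕ+,
      (∑' k : ℕ+, f ((n : ℕ) * (k : ℕ))) * (μ (n : ℕ) : ℂ) / ((n : ℕ) : ℂ)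
        = ∑' k : ℕ+, g (n, k) := by
    intro n
    rw [hgdef]
    simp only
    rw [tsum_div_const, tsum_mul_right]
  have S2 : Summable (fun n : ℕ+ =>
      ‖(∑' k : ℕ+, f ((n : ℕ) * (k : ℕ))) * (μ (n : ℕ) : ℂ) / ((n : ℕ) : ℂ)‖) := by
    refine Summable.of_nonneg_of_le (fun n => norm_nonneg _) (fun n => ?_) hsum2'
    rw [hterm n]
    exact norm_tsum_le_tsum_norm (hslice n)
  refine ⟨S1, S2, ?_⟩
  -- the equality
  have hfib := hg.hasSum.tsum_fiberwise (fun p : ℕ+ × ℕ+ => p.1 * p.2)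
  have hfe : ∀ m : ℕ+, (∑' b : (fun p : ℕ+ × ℕ+ => p.1 * p.2) ⁻¹' {m}, g (b : ℕ+ × ℕ+))
      = f (m : ℕ) * ((Nat.totient (m : ℕ)) : ℂ) / ((m : ℕ) : ℂ) := by
    intro m
    let e : {x : ℕ × ℕ // x ∈ (m : ℕ).divisorsAntidiagonal}
        ≃ ((fun p : ℕ+ × ℕ+ => p.1 * p.2) ⁻¹' {m}) :=
      { toFun := fun x => ⟨(⟨x.1.1, Nat.pos_of_ne_zero
          (Nat.ne_zero_of_mul_ne_zero_left (((Nat.mem_divisorsAntidiagonal.mp x.2).1).symm ▸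
            (Nat.mem_divisorsAntidiagonal.mp x.2).2))⟩,
          ⟨x.1.2, Nat.pos_of_ne_zero
          (Nat.ne_zero_of_mul_ne_zero_right (((Nat.mem_divisorsAntidiagonal.mp x.2).1).symm ▸
            (Nat.mem_divisorsAntidiagonal.mp x.2).2))⟩), by
          have := (Nat.mem_divisorsAntidiagonal.mp x.2).1
          simp only [Set.mem_preimage, Set.mem_singleton_iff]
          apply PNat.coe_injective
          exact this⟩
        invFun := fun b => ⟨((b.1.1 : ℕ), (b.1.2 : ℕ)), by
          rw [Nat.mem_divisorsAntidiagonal]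
          refine ⟨?_, m.ne_zero⟩
          have hb := b.2
          simp only [Set.mem_preimage, Set.mem_singleton_iff] at hb
          show ((b : ℕ+ × ℕ+).1 : ℕ) * ((b : ℕ+ × ℕ+).2 : ℕ) = (m : ℕ)
          exact_mod_cast congrArg PNat.val hb⟩
        left_inv := fun x => Subtype.ext rfl
        right_inv := fun b => Subtype.ext (Prod.ext (Subtype.ext rfl) (Subtype.ext rfl)) }
    rw [← e.tsum_eq]
    have : ∀ x : {x : ℕ × ℕ // x ∈ (m : ℕ).divisorsAntidiagonal},
        g (e x : ℕ+ × ℕ+) = f ((x : ℕ × ℕ).1 * (x : ℕ × ℕ).2) *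
          (μ (x : ℕ × ℕ).1 : ℂ) / ((x : ℕ × ℕ).1 : ℂ) := by
        rintro ⟨⟨a, b⟩, hx⟩
        simp only [hgdef]
        rfl
    rw [tsum_congr this,
      Finset.tsum_subtype ((m : ℕ).divisorsAntidiagonal)
        (fun x : ℕ × ℕ => f (x.1 * x.2) * (μ x.1 : ℂ) / (x.1 : ℂ))]
    rw [Finset.sum_congr rfl (fun x hx => by
      rw [(Nat.mem_divisorsAntidiagonal.mp hx).1])]
    calc ∑ x ∈ (m : ℕ).divisorsAntidiagonal, f (m : ℕ) * (μ x.1 : ℂ) / (x.1 : ℂ)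
        = f (m : ℕ) * ∑ x ∈ (m : ℕ).divisorsAntidiagonal, (μ x.1 : ℂ) / (x.1 : ℂ) := by
          rw [Finset.mul_sum]
          exact Finset.sum_congr rfl fun x _ => by ring
      _ = f (m : ℕ) * ((Nat.totient (m : ℕ) : ℂ) / ((m : ℕ) : ℂ)) := by
          rw [phi_div (m : ℕ) m.pos]
      _ = _ := by ring
  rw [funext hfe] at hfib
  rw [hfib.tsum_eq,
    hg.tsum_prod' (fun n => summable_norm_iff.mp (hslice n))]
  exact tsum_congr fun n => (hterm n).symm
end
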